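/- arXiv:2508.05396 — 2 statements merged into one kernel-verified Lean document; each statement's English description precedes it below -/
import Mathlib

section
/- Let E be a real normed vector space, K' a natural number, and for each k ∈ {1, …, K'} let α_k ∈ (0,1), β_k = 1 − α_k, and ᾱ_k = ∏_{s=1}^{k} α_s (so ᾱ_k ∈ (0,1)). Let ε_θ(·, k) : E → E be L-Lipschitz for every k, and define the posterior-mean map μ_k(A) = (1/√α_k) · (A − (β_k/√(1−ᾱ_k)) · ε_θ(A, k)). Set c_k = (√(1−ᾱ_k) + β_k·L) / √(α_k·(1−ᾱ_k)). Suppose two reverse chains are run with the same noise realizations: Ã_{k−1} = μ_k(Ã_k) + σ_k·Y_k and A_{k−1} = μ_k(A_k) + σ_k·Y_k for k = K', …, 1, where σ_k ∈ ℝ and Y_k ∈ E are identical in both chains. Then ‖Ã_0 − A_0‖ ≤ (∏_{k=1}^{K'} c_k) · ‖Ã_{K'} − A_{K'}‖. -/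
/-- **Local Contractivity in RTI-DP** (deterministic, coupled-noise form).
Two reverse DDPM chains run from step `K'` down to `0` with the same noise
realizations satisfy `‖Ã₀ − A₀‖ ≤ (∏ₖ cₖ) ‖Ã_{K'} − A_{K'}‖`, where
`cₖ = (√(1−ᾱₖ) + βₖ L)/√(αₖ (1−ᾱₖ))`. -/
theorem rti_dp_local_contractivity
    {E : Type*} [NormedAddCommGroup E] [NormedSpace ℝ E]
    (K' : ℕ) (α : ℕ → ℝ) (L : ℝ)
    (hα : ∀ k ∈ Finset.Icc 1 K', α k ∈ Set.Ioo (0 : ℝ) 1)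
    (β : ℕ → ℝ) (hβ : ∀ k, β k = 1 - α k)
    (αbar : ℕ → ℝ) (hαbar : ∀ k, αbar k = ∏ s ∈ Finset.Icc 1 k, α s)
    (hαbar01 : ∀ k ∈ Finset.Icc 1 K', αbar k ∈ Set.Ioo (0 : ℝ) 1)
    (εθ : E → ℕ → E)
    (hLip : ∀ k, ∀ A B : E, ‖εθ A k - εθ B k‖ ≤ L * ‖A - B‖)
    (μ : ℕ → E → E)
    (hμ : ∀ k (A : E), μ k A =
      (1 / Real.sqrt (α k)) • (A - (β k / Real.sqrt (1 - αbar k)) • εθ A k))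
    (c : ℕ → ℝ)
    (hc : ∀ k, c k =
      (Real.sqrt (1 - αbar k) + β k * L) / Real.sqrt (α k * (1 - αbar k)))
    (σ : ℕ → ℝ) (Y : ℕ → E) (Atil A : ℕ → E)
    (hAtil : ∀ k ∈ Finset.Icc 1 K', Atil (k - 1) = μ k (Atil k) + σ k • Y k)
    (hA : ∀ k ∈ Finset.Icc 1 K', A (k - 1) = μ k (A k) + σ k • Y k) :
    ‖Atil 0 - A 0‖ ≤ (∏ k ∈ Finset.Icc 1 K', c k) * ‖Atil K' - A K'‖ := by
  rcases subsingleton_or_nontrivial E with hE | hE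
  · have h0 : Atil 0 = A 0 := Subsingleton.elim _ _
    have hK : Atil K' = A K' := Subsingleton.elim _ _
    simp [h0, hK]
  · obtain ⟨x, y, hxy⟩ := exists_pair_ne E
    have hL : 0 ≤ L := by
      have h1 := hLip 1 x y
      have h2 : 0 < ‖x - y‖ := by
        rw [norm_pos_iff, sub_ne_zero]; exact hxy
      nlinarith [norm_nonneg (εθ x 1 - εθ y 1)]
    have hcnn : ∀ k ∈ Finset.Icc 1 K', 0 ≤ c k := by
      intro k hk
      have hαk := hα k hk
      have hβk : 0 ≤ β k := by rw [hβ]; linarith [hαk.2]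
      rw [hc]
      exact div_nonneg (add_nonneg (Real.sqrt_nonneg _) (mul_nonneg hβk hL))
        (Real.sqrt_nonneg _)
    have key : ∀ k ∈ Finset.Icc 1 K', ∀ X Z : E,
        ‖μ k X - μ k Z‖ ≤ c k * ‖X - Z‖ := by
      intro k hk X Z
      have hαk := hα k hk
      have hab := hαbar01 k hk
      have hsa : 0 < Real.sqrt (α k) := Real.sqrt_pos.2 hαk.1
      have h1a : 0 < 1 - αbar k := by linarith [hab.2]
      have hsb : 0 < Real.sqrt (1 - αbar k) := Real.sqrt_pos.2 h1a
      have hβk : 0 ≤ β k := by rw [hβ]; linarith [hαk.2]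
      have hdiff : μ k X - μ k Z =
          (1 / Real.sqrt (α k)) •
            ((X - Z) - (β k / Real.sqrt (1 - αbar k)) • (εθ X k - εθ Z k)) := by
        rw [hμ, hμ, ← smul_sub]
        congr 1
        rw [smul_sub]
        abel
      rw [hdiff, norm_smul]
      have hbnd : ‖(X - Z) - (β k / Real.sqrt (1 - αbar k)) • (εθ X k - εθ Z k)‖
          ≤ ‖X - Z‖ + (β k / Real.sqrt (1 - αbar k)) * (L * ‖X - Z‖) := by
        refine (norm_sub_le _ _).trans ?_
        gcongr
        rw [norm_smul, Real.norm_eq_abs, abs_of_nonneg (by positivity)]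
        exact mul_le_mul_of_nonneg_left (hLip k X Z) (by positivity)
      have h1 : ‖(1 : ℝ) / Real.sqrt (α k)‖ = 1 / Real.sqrt (α k) := by
        rw [Real.norm_eq_abs, abs_of_nonneg (by positivity)]
      rw [h1]
      have hcval : c k = (Real.sqrt (1 - αbar k) + β k * L) /
          (Real.sqrt (α k) * Real.sqrt (1 - αbar k)) := by
        rw [hc, Real.sqrt_mul (le_of_lt hαk.1)]
      have hmul := mul_le_mul_of_nonneg_left hbnd
        (by positivity : (0:ℝ) ≤ 1 / Real.sqrt (α k))
      refine hmul.trans (le_of_eq ?_)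
      rw [hcval]
      field_simp
    have main : ∀ n, n ≤ K' →
        ‖Atil 0 - A 0‖ ≤ (∏ k ∈ Finset.Icc 1 n, c k) * ‖Atil n - A n‖ := by
      intro n
      induction n with
      | zero => intro _; simp
      | succ m ih =>
        intro hm
        have hmem : m + 1 ∈ Finset.Icc 1 K' := by
          rw [Finset.mem_Icc]; omega
        have hstep : Atil m - A m = μ (m+1) (Atil (m+1)) - μ (m+1) (A (m+1)) := by
          have h1 := hAtil (m+1) hmem
          have h2 := hA (m+1) hmem
          simp only [Nat.add_sub_cancel] at h1 h2
          rw [h1, h2]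
          abel
        have hb := key (m+1) hmem (Atil (m+1)) (A (m+1))
        have hprodnn : 0 ≤ ∏ k ∈ Finset.Icc 1 m, c k := by
          refine Finset.prod_nonneg fun k hk => hcnn k ?_
          rw [Finset.mem_Icc] at hk ⊢; omega
        calc ‖Atil 0 - A 0‖
            ≤ (∏ k ∈ Finset.Icc 1 m, c k) * ‖Atil m - A m‖ := ih (by omega)
          _ ≤ (∏ k ∈ Finset.Icc 1 m, c k) * (c (m+1) * ‖Atil (m+1) - A (m+1)‖) := by
              refine mul_le_mul_of_nonneg_left ?_ hprodnn
              rw [hstep]; exact hb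
          _ = (∏ k ∈ Finset.Icc 1 (m+1), c k) * ‖Atil (m+1) - A (m+1)‖ := by
              rw [Finset.prod_Icc_succ_top (by omega : 1 ≤ m + 1)]
              ring
    exact main K' le_rfl
end

section
/- Let E be a real normed vector space and (Ω, 𝓕, ℙ) a probability space. Let K' ∈ ℕ, and for k ∈ {1, …, K'} let α_k ∈ (0,1), β_k = 1 − α_k, ᾱ_k = ∏_{s=1}^{k} α_s, let ε_θ(·, k) : E → E be L-Lipschitz, μ_k(A) = (1/√α_k)(A − (β_k/√(1−ᾱ_k)) ε_θ(A, k)), and c_k = (√(1−ᾱ_k) + β_k·L)/√(α_k·(1−ᾱ_k)). Let Ã_k, A_k : Ω → E (k = 0, …, K') be random variables satisfying, pointwise on Ω, Ã_{k−1} = μ_k(Ã_k) + σ_k·Y_k and A_{k−1} = μ_k(A_k) + σ_k·Y_k with the same random noises Y_k : Ω → E and σ_k ∈ ℝ. If the error ω ↦ ‖Ã_{K'}(ω) − A_{K'}(ω)‖ is integrable, then ω ↦ ‖Ã_0(ω) − A_0(ω)‖ is integrable and 𝔼[‖Ã_0 − A_0‖] ≤ (∏_{k=1}^{K'} c_k)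 · 𝔼[‖Ã_{K'} − A_{K'}‖]. -/
open MeasureTheory

/-- **Expectation form of local contractivity for RTI-DP.** Two reverse DDPM
chains of random variables, run pointwise with the same noise realizations,
satisfy `𝔼[‖Ã₀ − A₀‖] ≤ (∏ₖ cₖ) 𝔼[‖Ã_{K'} − A_{K'}‖]` (and integrability of the
final error), where `cₖ = (√(1−ᾱₖ) + βₖ L)/√(αₖ (1−ᾱₖ))`. -/
theorem rti_dp_expected_contractivity
    {E : Type*} [NormedAddCommGroup E] [NormedSpace ℝ E]
    {Ω : Type*} [MeasurableSpace Ω] (P : Measure Ω) [IsProbabilityMeasure P]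
    (K' : ℕ) (α : ℕ → ℝ) (L : ℝ)
    (hα : ∀ k ∈ Finset.Icc 1 K', α k ∈ Set.Ioo (0 : ℝ) 1)
    (β : ℕ → ℝ) (hβ : ∀ k, β k = 1 - α k)
    (αbar : ℕ → ℝ) (hαbar : ∀ k, αbar k = ∏ s ∈ Finset.Icc 1 k, α s)
    (hαbar01 : ∀ k ∈ Finset.Icc 1 K', αbar k ∈ Set.Ioo (0 : ℝ) 1)
    (εθ : E → ℕ → E)
    (hLip : ∀ k, ∀ A B : E, ‖εθ A k - εθ B k‖ ≤ L * ‖A - B‖)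
    (μ : ℕ → E → E)
    (hμ : ∀ k (A : E), μ k A =
      (1 / Real.sqrt (α k)) • (A - (β k / Real.sqrt (1 - αbar k)) • εθ A k))
    (c : ℕ → ℝ)
    (hc : ∀ k, c k =
      (Real.sqrt (1 - αbar k) + β k * L) / Real.sqrt (α k * (1 - αbar k)))
    (σ : ℕ → ℝ) (Y : ℕ → Ω → E) (Atil A : ℕ → Ω → E)
    (hmeasTil : ∀ k, AEStronglyMeasurable (Atil k) P)
    (hmeas : ∀ k, AEStronglyMeasurable (A k) P)
    (hAtil : ∀ k ∈ Finset.Icc 1 K', ∀ ω : Ω,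
      Atil (k - 1) ω = μ k (Atil k ω) + σ k • Y k ω)
    (hA : ∀ k ∈ Finset.Icc 1 K', ∀ ω : Ω,
      A (k - 1) ω = μ k (A k ω) + σ k • Y k ω)
    (hInt : Integrable (fun ω => ‖Atil K' ω - A K' ω‖) P) :
    Integrable (fun ω => ‖Atil 0 ω - A 0 ω‖) P ∧
      ∫ ω, ‖Atil 0 ω - A 0 ω‖ ∂P ≤
        (∏ k ∈ Finset.Icc 1 K', c k) * ∫ ω, ‖Atil K' ω - A K' ω‖ ∂P := by

  rcases subsingleton_or_nontrivial E with hE | hE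
  · have h0 : (fun ω => ‖Atil 0 ω - A 0 ω‖) = fun _ => (0 : ℝ) := by
      funext ω; rw [Subsingleton.elim (Atil 0 ω) (A 0 ω)]; simp
    have hK : (fun ω => ‖Atil K' ω - A K' ω‖) = fun _ => (0 : ℝ) := by
      funext ω; rw [Subsingleton.elim (Atil K' ω) (A K' ω)]; simp
    rw [h0, hK]
    simp [integrable_const]
  · -- L is nonnegative
    obtain ⟨x, y, hxy⟩ := exists_pair_ne E
    have hL : 0 ≤ L := by
      have h1 := hLip 0 x y
      have h2 : (0:ℝ) < ‖x - y‖ := by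
        simpa [sub_eq_zero] using hxy
      nlinarith [norm_nonneg (εθ x 0 - εθ y 0)]
    -- nonnegativity of c on the index range
    have hcnn : ∀ k ∈ Finset.Icc 1 K', 0 ≤ c k := by
      intro k hk
      have hαk := hα k hk
      have hᾱk := hαbar01 k hk
      rw [hc]
      apply div_nonneg
      · have : 0 ≤ β k * L := mul_nonneg (by rw [hβ]; linarith [hαk.2]) hL
        have := Real.sqrt_nonneg (1 - αbar k)
        linarith
      · exact Real.sqrt_nonneg _
    -- pointwise contraction
    have hstep : ∀ k ∈ Finset.Icc 1 K', ∀ ω : Ω,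
        ‖Atil (k - 1) ω - A (k - 1) ω‖ ≤ c k * ‖Atil k ω - A k ω‖ := by
      intro k hk ω
      have hαk := hα k hk
      have hᾱk := hαbar01 k hk
      set sα := Real.sqrt (α k) with hsα
      set s1 := Real.sqrt (1 - αbar k) with hs1
      have hsαpos : 0 < sα := Real.sqrt_pos.mpr hαk.1
      have hs1pos : 0 < s1 := Real.sqrt_pos.mpr (by linarith [hᾱk.2])
      have hβnn : 0 ≤ β k := by rw [hβ]; linarith [hαk.2]
      have hmul : Real.sqrt (α k * (1 - αbar k)) = sα * s1 :=
        Real.sqrt_mul (le_of_lt hαk.1) _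
      set X := Atil k ω
      set Z := A k ω
      set d := εθ X k - εθ Z k with hd
      have hdiff : Atil (k - 1) ω - A (k - 1) ω
          = (1 / sα) • ((X - Z) - (β k / s1) • d) := by
        rw [hAtil k hk ω, hA k hk ω, add_sub_add_right_eq_sub, hμ, hμ, ← smul_sub]
        congr 1
        rw [hd, smul_sub]
        abel
      rw [hdiff, norm_smul, Real.norm_eq_abs, abs_of_pos (by positivity), hc, hmul]
      have hb : ‖(X - Z) - (β k / s1) • d‖ ≤ ‖X - Z‖ + (β k / s1) * (L * ‖X - Z‖) := by
        calc ‖(X - Z) - (β k / s1) • d‖ ≤ ‖X - Z‖ + ‖(β k / s1) • d‖ := norm_sub_le _ _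
        _ = ‖X - Z‖ + (β k / s1) * ‖d‖ := by
            rw [norm_smul, Real.norm_eq_abs, abs_of_nonneg (by positivity)]
        _ ≤ ‖X - Z‖ + (β k / s1) * (L * ‖X - Z‖) := by
            have := hLip k X Z
            have h2 : 0 ≤ β k / s1 := by positivity
            nlinarith
      calc (1 / sα) * ‖(X - Z) - (β k / s1) • d‖
          ≤ (1 / sα) * (‖X - Z‖ + (β k / s1) * (L * ‖X - Z‖)) := by
            apply mul_le_mul_of_nonneg_left hb (by positivity)
        _ = (s1 + β k * L) / (sα * s1) * ‖X - Z‖ := by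
            field_simp
    -- downward induction
    have main : ∀ n, n ≤ K' →
        Integrable (fun ω => ‖Atil (K' - n) ω - A (K' - n) ω‖) P ∧
        ∫ ω, ‖Atil (K' - n) ω - A (K' - n) ω‖ ∂P ≤
          (∏ k ∈ Finset.Icc (K' - n + 1) K', c k) *
            ∫ ω, ‖Atil K' ω - A K' ω‖ ∂P := by
      intro n
      induction n with
      | zero =>
          intro _
          refine ⟨by simpa using hInt, ?_⟩
          simp
      | succ n ih =>
          intro hn
          have hn' : n ≤ K' := Nat.le_of_succ_le hn
          obtain ⟨ihInt, ihBound⟩ := ih hn'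
          set k := K' - (n + 1) with hkdef
          have hk1 : k + 1 = K' - n := by omega
          have hk1mem : k + 1 ∈ Finset.Icc 1 K' := by
            simp only [Finset.mem_Icc]; omega
          have hptw : ∀ ω : Ω, ‖Atil k ω - A k ω‖ ≤ c (k + 1) * ‖Atil (k+1) ω - A (k+1) ω‖ := by
            intro ω
            have := hstep (k + 1) hk1mem ω
            simpa using this
          have hcnn' : 0 ≤ c (k + 1) := hcnn _ hk1mem
          rw [← hk1] at ihInt ihBound
          have hIntk : Integrable (fun ω => ‖Atil k ω - A k ω‖) P := by
            refine (ihInt.const_mul (c (k+1))).mono' ?_ ?_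
            · exact ((hmeasTil k).sub (hmeas k)).norm
            · filter_upwards with ω
              rw [Real.norm_eq_abs, abs_of_nonneg (norm_nonneg _)]
              exact hptw ω
          refine ⟨hIntk, ?_⟩
          have h1 : ∫ ω, ‖Atil k ω - A k ω‖ ∂P ≤
              c (k + 1) * ∫ ω, ‖Atil (k+1) ω - A (k+1) ω‖ ∂P := by
            rw [← integral_const_mul]
            exact integral_mono hIntk (ihInt.const_mul _) hptw
          have hprod : ∏ j ∈ Finset.Icc (k + 1) K', c j =
              c (k + 1) * ∏ j ∈ Finset.Icc (k + 1 + 1) K', c j := by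
            have h2 : Finset.Icc (k + 1 + 1) K' = Finset.Ioc (k + 1) K' := by
              rw [← Finset.Icc_add_one_left_eq_Ioc]
            rw [h2, ← Finset.Ioc_insert_left (by omega : k + 1 ≤ K'),
              Finset.prod_insert Finset.left_notMem_Ioc]
          calc ∫ ω, ‖Atil k ω - A k ω‖ ∂P
              ≤ c (k + 1) * ∫ ω, ‖Atil (k+1) ω - A (k+1) ω‖ ∂P := h1
            _ ≤ c (k + 1) * ((∏ j ∈ Finset.Icc (k + 1 + 1) K', c j) *
                  ∫ ω, ‖Atil K' ω - A K' ω‖ ∂P) :=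
                mul_le_mul_of_nonneg_left ihBound hcnn'
            _ = (∏ j ∈ Finset.Icc (k + 1) K', c j) *
                  ∫ ω, ‖Atil K' ω - A K' ω‖ ∂P := by rw [hprod]; ring
      
    have := main K' le_rfl
    simpa using this
end
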